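/- Let k be an uncountable algebraically closed field and S = k[z_1, z_2, ...]. For every ideal J of S, the ideal of polynomials vanishing on V(J) equals the radical of J (strong Nullstellensatz). -/

import Mathlib

open MvPolynomial
set_option maxHeartbeats 1000000
set_option synthInstance.maxHeartbeats 400000

lemma aux_surj {k : Type*} {K : Type*} [Field k] [IsAlgClosed k] [Uncountable k]
    [Field K] [Algebra k K] (hrank : Module.rank k K ≤ Cardinal.aleph0) :
    Function.Surjective (algebraMap k K) := by
  haveI : Algebra.IsAlgebraic k K := by
    refine ⟨fun x => ?_⟩
    by_contra hx
    have H : Transcendental k x := hx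
    have li := H.linearIndependent_sub_inv
    have h2 := li.cardinal_lift_le_rank
    have h3 : Cardinal.lift (Cardinal.mk k) ≤ Cardinal.lift Cardinal.aleph0 :=
      h2.trans (Cardinal.lift_le.2 hrank)
    rw [Cardinal.lift_aleph0, Cardinal.lift_le_aleph0] at h3
    exact absurd h3 (not_le.2 (Cardinal.aleph0_lt_mk (α := k)))
  exact IsAlgClosed.algebraMap_bijective_of_isIntegral.2

lemma weak_nullstellensatz {k : Type*} [Field k] [IsAlgClosed k] [Uncountable k]
    (M : Ideal (MvPolynomial ℕ k)) (hM : M ≠ ⊤) :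
    ∃ a : ℕ → k, ∀ g ∈ M, eval a g = 0 := by
  obtain ⟨M', hMmax, hle⟩ := Ideal.exists_le_maximal M hM
  haveI := hMmax
  let K := MvPolynomial ℕ k ⧸ M'
  have hrankS : Cardinal.lift.{0} (Module.rank k (MvPolynomial ℕ k)) = Cardinal.aleph0 := by
    rw [← (MvPolynomial.basisMonomials ℕ k).mk_eq_rank]
    simp [Cardinal.mk_eq_aleph0]
  have hrank : Module.rank k K ≤ Cardinal.aleph0 := by
    have h1 : Cardinal.lift.{0} (Module.rank k K) ≤ Cardinal.aleph0 := by
      rw [← hrankS]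
      exact Cardinal.lift_le.2 <|
        LinearMap.rank_le_of_surjective (Ideal.Quotient.mkₐ k M').toLinearMap
          Ideal.Quotient.mk_surjective
    simpa using h1
  letI : Field K := Ideal.Quotient.field M'
  have hsurj : Function.Surjective (algebraMap k K) := aux_surj hrank
  choose inv hinv using hsurj
  refine ⟨fun n => inv (Ideal.Quotient.mk M' (X n)), fun g hg => ?_⟩
  have key : (algebraMap k K).comp (eval fun n => inv (Ideal.Quotient.mk M' (X n))) =
      Ideal.Quotient.mk M' := by
    apply MvPolynomial.ringHom_ext
    · intro r
      rw [IsScalarTower.algebraMap_eq k (MvPolynomial ℕ k) K]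
      simp only [RingHom.comp_apply, MvPolynomial.algebraMap_eq, eval_C]
      rfl
    · intro n
      simp [hinv]
  have h0 : algebraMap k K (eval (fun n => inv (Ideal.Quotient.mk M' (X n))) g) = 0 := by
    have := RingHom.congr_fun key g
    rw [RingHom.comp_apply] at this
    rw [this, Ideal.Quotient.eq_zero_iff_mem]
    exact hle hg
  exact (algebraMap k K).injective (by simpa using h0)

/-- Strong Nullstellensatz in countably many variables over an uncountable algebraically
closed field: for every ideal `J` of `k[z_1, z_2, ...]`, `I(V(J)) = √J`. -/
theorem vanishing_ideal_eq_radical {k : Type*} [Field k] [IsAlgClosed k] [Uncountable k]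
    (J : Ideal (MvPolynomial ℕ k)) :
    ∀ f : MvPolynomial ℕ k,
      (∀ a : ℕ → k, (∀ g ∈ J, eval a g = 0) → eval a f = 0) ↔ f ∈ J.radical := by
  intro f
  constructor
  · intro h
    by_contra hf
    rw [Ideal.radical_eq_sInf] at hf
    simp only [Submodule.mem_sInf, Set.mem_setOf_eq, not_forall] at hf
    obtain ⟨P, ⟨hJP, hPprime⟩, hfP⟩ := hf
    haveI := hPprime
    let Q := MvPolynomial ℕ k ⧸ P
    let F := FractionRing Q
    let c : MvPolynomial ℕ k →+* F := (algebraMap Q F).comp (Ideal.Quotient.mk P)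
    have hcf : c f ≠ 0 := by
      simp only [c, RingHom.comp_apply]
      intro h0
      have := (IsFractionRing.injective Q F) (by simpa using h0)
      exact hfP ((Ideal.Quotient.eq_zero_iff_mem).1 this)
    let b : ℕ → F := fun n => Nat.casesOn n (c f)⁻¹ (fun m => c (X m))
    let ψ : MvPolynomial ℕ k →+* F := eval₂Hom (c.comp C) b
    have h2 : (eval₂Hom (c.comp MvPolynomial.C) (fun n => c (X n)) :
        MvPolynomial ℕ k →+* F) = c := by
      apply MvPolynomial.ringHom_ext <;> simp
    have hψr : ∀ g, ψ (rename Nat.succ g) = c g := by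
      intro g
      have h1 : ψ (rename Nat.succ g) = eval₂ (c.comp C) (b ∘ Nat.succ) g := by
        simpa [ψ] using eval₂_rename (c.comp C) Nat.succ b g
      rw [h1]
      have hbs : (b ∘ Nat.succ) = fun n => c (X n) := rfl
      rw [hbs, ← MvPolynomial.coe_eval₂Hom, h2]
    let J' : Ideal (MvPolynomial ℕ k) :=
      Ideal.span ((rename Nat.succ '' (J : Set (MvPolynomial ℕ k))) ∪
        {1 - X 0 * rename Nat.succ f})
    have hJ' : J' ≠ ⊤ := by
      intro htop
      have hker : J' ≤ RingHom.ker ψ := by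
        rw [Ideal.span_le]
        rintro x (⟨g, hg, rfl⟩ | rfl)
        · simp only [SetLike.mem_coe, RingHom.mem_ker, hψr g]
          simp only [c, RingHom.comp_apply]
          rw [Ideal.Quotient.eq_zero_iff_mem.2 (hJP hg), map_zero]
        · simp only [SetLike.mem_coe, RingHom.mem_ker, map_sub, map_mul, map_one, hψr f]
          have hb0 : ψ (X 0) = (c f)⁻¹ := by simp [ψ, b]
          rw [hb0, inv_mul_cancel₀ hcf, sub_self]
      have h1 : (1 : MvPolynomial ℕ k) ∈ J' := htop ▸ Submodule.mem_top
      have := hker h1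
      rw [RingHom.mem_ker, map_one] at this
      exact one_ne_zero this
    obtain ⟨bb, hbb⟩ := weak_nullstellensatz J' hJ'
    have hvan : ∀ g ∈ J, eval (bb ∘ Nat.succ) g = 0 := by
      intro g hg
      have := hbb _ (Ideal.subset_span (Or.inl ⟨g, hg, rfl⟩))
      rwa [eval_rename] at this
    have hf0 : eval (bb ∘ Nat.succ) f = 0 := h _ hvan
    have hone := hbb _ (Ideal.subset_span (Or.inr rfl))
    rw [map_sub, map_mul, eval_rename, hf0, mul_zero, map_one, sub_zero] at hone
    exact one_ne_zero hone
  · intro hf a ha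
    obtain ⟨n, hn⟩ := hf
    have := ha _ hn
    rw [map_pow] at this
    exact (pow_eq_zero_iff'.mp this).1
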